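/- Let T be a junction tree with cliques {C_1, ..., C_m} and suppose for each clique C_i we have a distribution p_i on {0,1}^{C_i} such that for every edge (C_i, C_j) of T the marginals of p_i and p_j on C_i ∩ C_j agree. Then there exists a joint distribution p on {0,1}^{∪C_i} whose marginal on each C_i equals p_i. -/

import Mathlib

open scoped Classical

/-- A probability distribution on binary vectors over `Fin K`. -/
def IsDistribution {K : ℕ} (p : (Fin K → Bool) → ℝ) : Prop :=
  (∀ v, 0 ≤ p v) ∧ ∑ v, p v = 1

/-- Marginal probability of the event "agrees with `v` on the itemset `X`". -/
noncomputable def margAt {K : ℕ} (p : (Fin K → Bool) → ℝ) (X : Finset (Fin K))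
    (v : Fin K → Bool) : ℝ :=
  ∑ w : Fin K → Bool, if ∀ i ∈ X, w i = v i then p w else 0

/-- Frequency of an itemset: probability that all its attributes are 1. -/
noncomputable def pAll {K : ℕ} (p : (Fin K → Bool) → ℝ) (X : Finset (Fin K)) : ℝ :=
  margAt p X (fun _ => true)

/-- Empirical entropy of the marginal of `q` on the itemset `X`. -/
noncomputable def entX {K : ℕ} (q : (Fin K → Bool) → ℝ) (X : Finset (Fin K)) : ℝ :=
  -∑ v : {i // i ∈ X} → Bool,
    (∑ w : Fin K → Bool, if ∀ i : {i // i ∈ X}, w i.1 = v i then q w else 0) *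
      Real.log (∑ w : Fin K → Bool, if ∀ i : {i // i ∈ X}, w i.1 = v i then q w else 0)

/-- Entropy of a distribution on the full space. -/
noncomputable def entDist {K : ℕ} (p : (Fin K → Bool) → ℝ) : ℝ :=
  -∑ v : Fin K → Bool, p v * Real.log (p v)

def DownwardClosed {K : ℕ} (𝒢 : Finset (Finset (Fin K))) : Prop :=
  ∀ X ∈ 𝒢, ∀ Y ⊆ X, Y ∈ 𝒢

def Covers {K : ℕ} (𝒢 : Finset (Finset (Fin K))) : Prop :=
  ∀ a : Fin K, ∃ X ∈ 𝒢, a ∈ X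

/-- A junction tree (forest) over the family `𝒢`: an acyclic graph on the members of `𝒢`
whose edges join intersecting cliques, such that cliques sharing an attribute are connected,
and satisfying the running intersection property. -/
def IsJunctionTree {K : ℕ} (𝒢 : Finset (Finset (Fin K)))
    (G : SimpleGraph {C // C ∈ 𝒢}) : Prop :=
  G.IsAcyclic ∧
  (∀ X Y, G.Adj X Y → (X.1 ∩ Y.1).Nonempty) ∧
  (∀ (X Y : {C // C ∈ 𝒢}) (a : Fin K), a ∈ X.1 → a ∈ Y.1 → G.Reachable X Y) ∧
  (∀ (X Y : {C // C ∈ 𝒢}) (a : Fin K), a ∈ X.1 → a ∈ Y.1 →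
    ∀ w : G.Walk X Y, w.IsPath → ∀ Z ∈ w.support, a ∈ Z.1)

def Decomposable {K : ℕ} (𝒢 : Finset (Finset (Fin K))) : Prop :=
  ∃ G : SimpleGraph {C // C ∈ 𝒢}, IsJunctionTree 𝒢 G

noncomputable def sepEnt {K : ℕ} (q : (Fin K → Bool) → ℝ) {𝒢 : Finset (Finset (Fin K))}
    (e : Sym2 {C // C ∈ 𝒢}) : ℝ :=
  Sym2.lift ⟨fun X Y => entX q (X.1 ∩ Y.1), fun X Y => congrArg (entX q) (Finset.inter_comm _ _)⟩ e

/-- Entropy of a junction tree: sum over cliques minus sum over separators. -/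
noncomputable def treeEnt {K : ℕ} (q : (Fin K → Bool) → ℝ) (𝒢 : Finset (Finset (Fin K)))
    (G : SimpleGraph {C // C ∈ 𝒢}) : ℝ :=
  (∑ C : {C // C ∈ 𝒢}, entX q C.1) - ∑ e ∈ G.edgeFinset, sepEnt q e

/-- The junction tree distribution: product of clique marginals over product of
separator marginals. -/
noncomputable def jtDist {K : ℕ} (q : (Fin K → Bool) → ℝ) (𝒢 : Finset (Finset (Fin K)))
    (G : SimpleGraph {C // C ∈ 𝒢}) (v : Fin K → Bool) : ℝ :=
  (∏ C : {C // C ∈ 𝒢}, margAt q C.1 v) /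
    ∏ e ∈ G.edgeFinset,
      Sym2.lift ⟨fun X Y => margAt q (X.1 ∩ Y.1) v,
        fun X Y => congrArg (fun S => margAt q S v) (Finset.inter_comm _ _)⟩ e

/-- A function on full binary vectors that only depends on the attributes in `C`. -/
def DependsOnlyOn {K : ℕ} (p : (Fin K → Bool) → ℝ) (C : Finset (Fin K)) : Prop :=
  ∀ v w, (∀ i ∈ C, v i = w i) → p v = p w

/-- Empirical distribution of a dataset of `N` transactions. -/
noncomputable def empirical {K N : ℕ} (D : Fin N → (Fin K → Bool)) :
    (Fin K → Bool) → ℝ :=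
  fun v => ((Finset.univ.filter (fun t => D t = v)).card : ℝ) / N



section GlueAux

open Finset SimpleGraph

variable {K : ℕ}

private lemma margAt_nonneg {p : (Fin K → Bool) → ℝ} (hp : ∀ v, 0 ≤ p v)
    (X : Finset (Fin K)) (v : Fin K → Bool) : 0 ≤ margAt p X v := by
  refine Finset.sum_nonneg fun w _ => ?_
  split_ifs
  · exact hp w
  · exact le_rfl

private lemma margAt_congr (p : (Fin K → Bool) → ℝ) {X : Finset (Fin K)} {v w : Fin K → Bool}
    (h : ∀ i ∈ X, v i = w i) : margAt p X v = margAt p X w := by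
  refine Finset.sum_congr rfl fun u _ => ?_
  refine if_congr ?_ rfl rfl
  exact forall₂_congr fun i hi => by rw [h i hi]

private lemma margAt_fun_congr {p q : (Fin K → Bool) → ℝ} (h : ∀ v, p v = q v)
    (X : Finset (Fin K)) (v : Fin K → Bool) : margAt p X v = margAt q X v := by
  unfold margAt
  exact Finset.sum_congr rfl fun u _ => by rw [h u]

private lemma margAt_empty (p : (Fin K → Bool) → ℝ) (v : Fin K → Bool) :
    margAt p ∅ v = ∑ w, p w := by
  unfold margAt
  simp

private lemma margAt_le {p : (Fin K → Bool) → ℝ} (hp : ∀ v, 0 ≤ p v) {S X : Finset (Fin K)}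
    (hSX : S ⊆ X) (v : Fin K → Bool) : margAt p X v ≤ margAt p S v := by
  refine Finset.sum_le_sum fun u _ => ?_
  by_cases h1 : ∀ i ∈ X, u i = v i
  · rw [if_pos h1, if_pos fun i hi => h1 i (hSX hi)]
  · rw [if_neg h1]
    split_ifs
    · exact hp u
    · exact le_rfl

private lemma card_agree (A : Finset (Fin K)) (v : Fin K → Bool) :
    (Finset.univ.filter fun u : Fin K → Bool => ∀ i ∈ A, u i = v i).card = 2 ^ Aᶜ.card := by
  have h : (Finset.univ.filter fun u : Fin K → Bool => ∀ i ∈ A, u i = v i).card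
      = (Finset.univ : Finset ({i // i ∈ Aᶜ} → Bool)).card := by
    refine Finset.card_bij'
      (fun (u : Fin K → Bool) _ => fun j : {i // i ∈ Aᶜ} => u j.1)
      (fun (x : {i // i ∈ Aᶜ} → Bool) _ =>
        fun i => if h : i ∈ A then v i else x ⟨i, Finset.mem_compl.mpr h⟩)
      (fun u hu => Finset.mem_univ _) ?_ ?_ ?_
    · intro x _
      refine Finset.mem_filter.mpr ⟨Finset.mem_univ _, fun i hi => dif_pos hi⟩
    · intro u hu
      have hu' := (Finset.mem_filter.mp hu).2
      funext i
      dsimp only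
      by_cases hi : i ∈ A
      · rw [dif_pos hi, hu' i hi]
      · rw [dif_neg hi]
    · intro x _
      funext j
      dsimp only
      rw [dif_neg (Finset.mem_compl.mp j.2)]
  rw [h, Finset.card_univ, Fintype.card_fun, Fintype.card_coe, Fintype.card_bool]

private lemma card_pair (A B : Finset (Fin K)) (hAB : Aᶜ ⊆ B) (v w : Fin K → Bool) :
    (Finset.univ.filter fun u : Fin K → Bool =>
      (∀ i ∈ A, u i = v i) ∧ (∀ i ∈ B, w i = u i)).card
      = if ∀ i ∈ A ∩ B, w i = v i then 1 else 0 := by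
  split_ifs with hc
  · rw [Finset.card_eq_one]
    refine ⟨fun i => if i ∈ A then v i else w i, ?_⟩
    ext u
    simp only [Finset.mem_filter, Finset.mem_univ, true_and, Finset.mem_singleton]
    constructor
    · rintro ⟨h1, h2⟩
      funext i
      by_cases hiA : i ∈ A
      · rw [h1 i hiA, if_pos hiA]
      · rw [if_neg hiA, ← h2 i (hAB (Finset.mem_compl.mpr hiA))]
    · rintro rfl
      dsimp only
      refine ⟨fun i hi => if_pos hi, fun i hi => ?_⟩
      by_cases hiA : i ∈ A
      · rw [if_pos hiA]
        exact hc i (Finset.mem_inter.mpr ⟨hiA, hi⟩)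
      · rw [if_neg hiA]
  · rw [Finset.card_eq_zero, Finset.filter_eq_empty_iff]
    rintro u -
    rintro ⟨h1, h2⟩
    exact hc fun i hi =>
      (h2 i (Finset.mem_inter.mp hi).2).trans (h1 i (Finset.mem_inter.mp hi).1)

private lemma margAt_margAt (q : (Fin K → Bool) → ℝ) (A B : Finset (Fin K)) (hAB : Aᶜ ⊆ B)
    (v : Fin K → Bool) :
    margAt (fun u => margAt q B u) A v = margAt q (A ∩ B) v := by
  unfold margAt
  have step1 : ∀ u : Fin K → Bool,
      (if ∀ i ∈ A, u i = v i then ∑ w, if ∀ i ∈ B, w i = u i then q w else 0 else 0)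
      = ∑ w, if (∀ i ∈ A, u i = v i) ∧ (∀ i ∈ B, w i = u i) then q w else 0 := by
    intro u
    by_cases h : ∀ i ∈ A, u i = v i
    · rw [if_pos h]
      exact Finset.sum_congr rfl fun w _ => by rw [if_congr (and_iff_right h).symm rfl rfl]
    · rw [if_neg h]
      exact (Finset.sum_eq_zero fun w _ => by
        rw [if_neg (fun hh => h hh.1)]).symm
  rw [Finset.sum_congr rfl fun u _ => step1 u, Finset.sum_comm]
  refine Finset.sum_congr rfl fun w _ => ?_
  have h2 : (∑ u : Fin K → Bool,
      if (∀ i ∈ A, u i = v i) ∧ (∀ i ∈ B, w i = u i) then q w else 0)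
      = ((Finset.univ.filter fun u : Fin K → Bool =>
          (∀ i ∈ A, u i = v i) ∧ (∀ i ∈ B, w i = u i)).card : ℝ) * q w := by
    rw [← Finset.sum_filter, Finset.sum_const, nsmul_eq_mul]
  rw [h2, card_pair A B hAB v w]
  split_ifs <;> simp

private lemma margAt_eq_of_marg_eq {q1 q2 : (Fin K → Bool) → ℝ} {X Y : Finset (Fin K)}
    (hYX : Y ⊆ X) (h : ∀ v, margAt q1 X v = margAt q2 X v) (v : Fin K → Bool) :
    margAt q1 Y v = margAt q2 Y v := by
  have hA : (Xᶜ ∪ Y)ᶜ ⊆ X := by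
    intro a ha
    rw [Finset.mem_compl, Finset.mem_union, not_or, Finset.mem_compl, not_not] at ha
    exact ha.1
  have hAX : (Xᶜ ∪ Y) ∩ X = Y := by
    ext a
    simp only [Finset.mem_inter, Finset.mem_union, Finset.mem_compl]
    constructor
    · rintro ⟨h1 | h1, h2⟩
      · exact absurd h2 h1
      · exact h1
    · exact fun ha => ⟨Or.inr ha, hYX ha⟩
  calc margAt q1 Y v = margAt (fun u => margAt q1 X u) (Xᶜ ∪ Y) v := by
        rw [margAt_margAt q1 _ X hA v, hAX]
    _ = margAt (fun u => margAt q2 X u) (Xᶜ ∪ Y) v := margAt_fun_congr (fun u => h u) _ _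
    _ = margAt q2 Y v := by rw [margAt_margAt q2 _ X hA v, hAX]

private lemma marg_glue (p' c : (Fin K → Bool) → ℝ) (B X : Finset (Fin K)) (hX : X ⊆ B)
    (hc : ∀ w, margAt c B w = 1) (v : Fin K → Bool) :
    margAt (fun u => margAt p' B u * c u) X v = margAt p' X v := by
  unfold margAt
  have step1 : ∀ u : Fin K → Bool,
      (if ∀ i ∈ X, u i = v i then (∑ w, if ∀ i ∈ B, w i = u i then p' w else 0) * c u else 0)
      = ∑ w, if (∀ i ∈ X, u i = v i) ∧ (∀ i ∈ B, w i = u i) then p' w * c u else 0 := by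
    intro u
    by_cases h : ∀ i ∈ X, u i = v i
    · rw [if_pos h, Finset.sum_mul]
      refine Finset.sum_congr rfl fun w _ => ?_
      rw [ite_mul, zero_mul]
      exact if_congr (and_iff_right h).symm rfl rfl
    · rw [if_neg h]
      exact (Finset.sum_eq_zero fun w _ => by
        rw [if_neg (fun hh => h hh.1)]).symm
  rw [Finset.sum_congr rfl fun u _ => step1 u, Finset.sum_comm]
  refine Finset.sum_congr rfl fun w _ => ?_
  by_cases hw : ∀ i ∈ X, w i = v i
  · rw [if_pos hw]
    have step2 : ∀ u : Fin K → Bool,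
        (if (∀ i ∈ X, u i = v i) ∧ (∀ i ∈ B, w i = u i) then p' w * c u else 0)
        = if ∀ i ∈ B, u i = w i then p' w * c u else 0 := by
      intro u
      refine if_congr ?_ rfl rfl
      constructor
      · exact fun h i hi => (h.2 i hi).symm
      · intro h
        refine ⟨fun i hi => ?_, fun i hi => (h i hi).symm⟩
        rw [h i (hX hi), hw i hi]
    calc (∑ u : Fin K → Bool,
        if (∀ i ∈ X, u i = v i) ∧ (∀ i ∈ B, w i = u i) then p' w * c u else 0)
        = ∑ u : Fin K → Bool, if ∀ i ∈ B, u i = w i then p' w * c u else 0 :=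
          Finset.sum_congr rfl fun u _ => step2 u
      _ = p' w * ∑ u : Fin K → Bool, if ∀ i ∈ B, u i = w i then c u else 0 := by
          rw [Finset.mul_sum]
          exact Finset.sum_congr rfl fun u _ => by rw [mul_ite, mul_zero]
      _ = p' w * margAt c B w := rfl
      _ = p' w := by rw [hc w, mul_one]
  · rw [if_neg hw]
    refine Finset.sum_eq_zero fun u _ => ?_
    rw [if_neg]
    rintro ⟨h1, h2⟩
    exact hw fun i hi => (h2 i (hX hi)).trans (h1 i hi)

private lemma marg_clique (p' c : (Fin K → Bool) → ℝ) (B X : Finset (Fin K)) (hX : Xᶜ ⊆ B)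
    (hdep : ∀ u w, (∀ i ∈ X, u i = w i) → c u = c w) (v : Fin K → Bool) :
    margAt (fun u => margAt p' B u * c u) X v = c v * margAt p' (X ∩ B) v := by
  have step1 : margAt (fun u => margAt p' B u * c u) X v
      = margAt (fun u => margAt p' B u * c v) X v := by
    unfold margAt
    refine Finset.sum_congr rfl fun u _ => ?_
    dsimp only
    by_cases h : ∀ i ∈ X, u i = v i
    · rw [if_pos h, if_pos h, hdep u v h]
    · rw [if_neg h, if_neg h]
  have step2 : margAt (fun u => margAt p' B u * c v) X v
      = c v * margAt (fun u => margAt p' B u) X v := by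
    unfold margAt
    rw [Finset.mul_sum]
    refine Finset.sum_congr rfl fun u _ => ?_
    dsimp only
    split_ifs <;> ring
  rw [step1, step2, margAt_margAt p' X B hX v]

private lemma exists_leaf {ι : Type*} [Fintype ι] [DecidableEq ι] {G : SimpleGraph ι}
    (hac : G.IsAcyclic) (A : Finset ι) (hA : A.Nonempty)
    (hconv : ∀ x ∈ A, ∀ y ∈ A, ∀ w : G.Walk x y, w.IsPath → ∀ z ∈ w.support, z ∈ A) :
    ∃ ℓ ∈ A, ∀ x ∈ A, ∀ y ∈ A, G.Adj ℓ x → G.Adj ℓ y → x = y := by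
  classical
  by_cases hE : ∃ x ∈ A, ∃ y ∈ A, G.Adj x y
  · obtain ⟨a, haA, b, hbA, hab⟩ := hE
    set P : ℕ → Prop := fun m => ∃ x ∈ A, ∃ y ∈ A, ∃ w0 : G.Walk x y, w0.IsPath ∧
      (∀ z ∈ w0.support, z ∈ A) ∧ w0.length = m with hP
    have hP1 : P 1 := by
      refine ⟨a, haA, b, hbA, SimpleGraph.Walk.cons hab SimpleGraph.Walk.nil,
        (SimpleGraph.Path.singleton hab).2, ?_, rfl⟩
      intro z hz
      simp only [SimpleGraph.Walk.support_cons, SimpleGraph.Walk.support_nil,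
        List.mem_cons, List.mem_singleton] at hz
      rcases hz with rfl | hz
      · exact haA
      · rcases hz with rfl | h
        · exact hbA
        · exact absurd h List.not_mem_nil
    have hbd : ∀ m, P m → m ≤ Fintype.card ι := by
      rintro m ⟨x, -, y, -, w0, hw0, -, rfl⟩
      exact hw0.length_lt.le
    set N := Nat.findGreatest P (Fintype.card ι) with hN
    have hPN : P N := Nat.findGreatest_spec (hbd 1 hP1) hP1
    have hmax : ∀ m, P m → m ≤ N := fun m hm => Nat.le_findGreatest (hbd m hm) hm
    obtain ⟨x, hxA, y, hyA, w, hw, hsupp, hlen⟩ := hPN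
    refine ⟨y, hyA, ?_⟩
    suffices hkey : ∀ z ∈ A, G.Adj y z → z = w.reverse.getVert 1 by
      intro u hu u' hu' h1 h2
      rw [hkey u hu h1, hkey u' hu' h2]
    intro z hzA hyz
    by_cases hz : z ∈ w.support
    · have hqp : (w.takeUntil z hz).IsPath := hw.takeUntil hz
      have hynq : y ∉ (w.takeUntil z hz).support := by
        intro hyq
        have hnd : ((w.takeUntil z hz).support ++ (w.dropUntil z hz).support.tail).Nodup := by
          rw [← SimpleGraph.Walk.support_append, SimpleGraph.Walk.take_spec]
          exact hw.support_nodup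
        have hy2 : y ∈ (w.dropUntil z hz).support.tail := by
          have h3 : y ∈ (w.dropUntil z hz).support := SimpleGraph.Walk.end_mem_support _
          rw [SimpleGraph.Walk.support_eq_cons, List.mem_cons] at h3
          rcases h3 with h3 | h3
          · exact absurd h3 (G.ne_of_adj hyz)
          · exact h3
        exact List.disjoint_of_nodup_append hnd hyq hy2
      have hrp : ((w.takeUntil z hz).concat hyz.symm).IsPath := by
        rw [SimpleGraph.Walk.isPath_def, SimpleGraph.Walk.support_concat,
          List.nodup_append]
        refine ⟨hqp.support_nodup, List.nodup_singleton y, ?_⟩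
        intro t ht b hty rfl
        rw [List.mem_singleton] at hty
        subst hty
        exact hynq ht
      have hru : (w.takeUntil z hz).concat hyz.symm = w :=
        Subtype.ext_iff.mp (hac.path_unique ⟨_, hrp⟩ ⟨w, hw⟩)
      have hrev := congrArg SimpleGraph.Walk.reverse hru
      rw [SimpleGraph.Walk.reverse_concat] at hrev
      rw [← hrev, show (1:ℕ) = 0 + 1 from rfl, SimpleGraph.Walk.getVert_cons_succ,
        SimpleGraph.Walk.getVert_zero]
    · exfalso
      have hrp : (w.concat hyz).IsPath := by
        rw [SimpleGraph.Walk.isPath_def, SimpleGraph.Walk.support_concat,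
          List.nodup_append]
        refine ⟨hw.support_nodup, List.nodup_singleton z, ?_⟩
        intro t ht b htz rfl
        rw [List.mem_singleton] at htz
        subst htz
        exact hz ht
      have hPs : P (N + 1) := by
        refine ⟨x, hxA, z, hzA, w.concat hyz, hrp, ?_, ?_⟩
        · intro t ht
          rw [SimpleGraph.Walk.support_concat, List.mem_append] at ht
          rcases ht with ht | ht
          · exact hsupp t ht
          · rw [List.mem_singleton] at ht
            subst ht
            exact hzA
        · rw [SimpleGraph.Walk.length_concat, hlen]
      have := hmax (N + 1) hPs
      omega
  · obtain ⟨ℓ, hℓ⟩ := hA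
    exact ⟨ℓ, hℓ, fun x hx y hy hadj _ => absurd ⟨ℓ, hℓ, x, hx, hadj⟩ hE⟩

private lemma leaf_not_mem_path {ι : Type*} [DecidableEq ι] {G : SimpleGraph ι}
    {A : Finset ι} {ℓ : ι}
    (hleaf : ∀ x ∈ A, ∀ y ∈ A, G.Adj ℓ x → G.Adj ℓ y → x = y)
    {x y : ι} (hx : x ≠ ℓ) (hy : y ≠ ℓ) (w : G.Walk x y) (hw : w.IsPath)
    (hsupp : ∀ z ∈ w.support, z ∈ A) : ℓ ∉ w.support := by
  intro hℓ
  have hq2nn : ¬ (w.dropUntil ℓ hℓ).Nil :=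
    SimpleGraph.Walk.not_nil_of_ne (fun h => hy h.symm)
  have hq1nn : ¬ (w.takeUntil ℓ hℓ).reverse.Nil :=
    SimpleGraph.Walk.not_nil_of_ne (fun h => hx h.symm)
  have hadj2 : G.Adj ℓ ((w.dropUntil ℓ hℓ).getVert 1) :=
    SimpleGraph.Walk.adj_snd hq2nn
  have hadj1 : G.Adj ℓ ((w.takeUntil ℓ hℓ).reverse.getVert 1) :=
    SimpleGraph.Walk.adj_snd hq1nn
  have hmem2 : (w.dropUntil ℓ hℓ).getVert 1 ∈ (w.dropUntil ℓ hℓ).support := by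
    rw [SimpleGraph.Walk.mem_support_iff_exists_getVert]
    refine ⟨1, rfl, ?_⟩
    rw [SimpleGraph.Walk.not_nil_iff_lt_length] at hq2nn
    omega
  have hmem2t : (w.dropUntil ℓ hℓ).getVert 1 ∈ (w.dropUntil ℓ hℓ).support.tail := by
    have h3 := hmem2
    rw [SimpleGraph.Walk.support_eq_cons, List.mem_cons] at h3
    rcases h3 with h3 | h3
    · exact absurd h3.symm (G.ne_of_adj hadj2)
    · exact h3
  have hmem1 : (w.takeUntil ℓ hℓ).reverse.getVert 1 ∈ (w.takeUntil ℓ hℓ).support := by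
    have h3 : (w.takeUntil ℓ hℓ).reverse.getVert 1 ∈ (w.takeUntil ℓ hℓ).reverse.support := by
      rw [SimpleGraph.Walk.mem_support_iff_exists_getVert]
      refine ⟨1, rfl, ?_⟩
      rw [SimpleGraph.Walk.not_nil_iff_lt_length] at hq1nn
      omega
    rwa [SimpleGraph.Walk.support_reverse, List.mem_reverse] at h3
  have hA1 : (w.takeUntil ℓ hℓ).reverse.getVert 1 ∈ A :=
    hsupp _ (SimpleGraph.Walk.support_takeUntil_subset w hℓ hmem1)
  have hA2 : (w.dropUntil ℓ hℓ).getVert 1 ∈ A :=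
    hsupp _ (SimpleGraph.Walk.support_dropUntil_subset w hℓ hmem2)
  have heq : (w.takeUntil ℓ hℓ).reverse.getVert 1 = (w.dropUntil ℓ hℓ).getVert 1 :=
    hleaf _ hA1 _ hA2 hadj1 hadj2
  have hnd : ((w.takeUntil ℓ hℓ).support ++ (w.dropUntil ℓ hℓ).support.tail).Nodup := by
    rw [← SimpleGraph.Walk.support_append, SimpleGraph.Walk.take_spec]
    exact hw.support_nodup
  exact List.disjoint_of_nodup_append hnd hmem1 (heq ▸ hmem2t)

private lemma glue_main {K : ℕ} {ι : Type*} [Fintype ι] [DecidableEq ι]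
    (C : ι → Finset (Fin K)) (G : SimpleGraph ι) (hac : G.IsAcyclic)
    (hreach : ∀ (i j : ι) (a : Fin K), a ∈ C i → a ∈ C j → G.Reachable i j)
    (hRIP : ∀ (i j : ι) (a : Fin K), a ∈ C i → a ∈ C j →
      ∀ w : G.Walk i j, w.IsPath → ∀ z ∈ w.support, a ∈ C z)
    (pfam : ι → (Fin K → Bool) → ℝ) (hd : ∀ i, IsDistribution (pfam i))
    (hag : ∀ i j, G.Adj i j → ∀ v,
      margAt (pfam i) (C i ∩ C j) v = margAt (pfam j) (C i ∩ C j) v) :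
    ∀ (n : ℕ) (A : Finset ι), A.card = n →
      (∀ x ∈ A, ∀ y ∈ A, ∀ w : G.Walk x y, w.IsPath → ∀ z ∈ w.support, z ∈ A) →
      ∃ p : (Fin K → Bool) → ℝ, IsDistribution p ∧
        ∀ i ∈ A, ∀ v, margAt p (C i) v = margAt (pfam i) (C i) v := by
  intro n
  induction n with
  | zero =>
    intro A hA _
    rw [Finset.card_eq_zero] at hA
    subst hA
    refine ⟨fun _ => (2 : ℝ)⁻¹ ^ K, ⟨fun v => by positivity, ?_⟩, by simp⟩
    rw [Finset.sum_const, Finset.card_univ]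
    have hcard : Fintype.card (Fin K → Bool) = 2 ^ K := by
      rw [Fintype.card_fun, Fintype.card_bool, Fintype.card_fin]
    rw [hcard, nsmul_eq_mul]
    push_cast
    rw [← mul_pow]
    norm_num
  | succ n ih =>
    intro A hA hconv
    have hAne : A.Nonempty := by
      rw [← Finset.card_pos, hA]
      omega
    obtain ⟨ℓ, hℓA, hleaf⟩ := exists_leaf hac A hAne hconv
    have hsubA : A.erase ℓ ⊆ A := Finset.erase_subset _ _
    have hA'card : (A.erase ℓ).card = n := by
      rw [Finset.card_erase_of_mem hℓA, hA]
      omega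
    have hA'conv : ∀ x ∈ A.erase ℓ, ∀ y ∈ A.erase ℓ, ∀ w : G.Walk x y, w.IsPath →
        ∀ z ∈ w.support, z ∈ A.erase ℓ := by
      intro x hx y hy w hw z hz
      have hinA : ∀ t ∈ w.support, t ∈ A := hconv x (hsubA hx) y (hsubA hy) w hw
      have hnℓ : ℓ ∉ w.support :=
        leaf_not_mem_path hleaf (Finset.ne_of_mem_erase hx) (Finset.ne_of_mem_erase hy) w hw hinA
      exact Finset.mem_erase.mpr ⟨fun h => hnℓ (h ▸ hz), hinA z hz⟩
    obtain ⟨p', hp'dist, hp'marg⟩ := ih (A.erase ℓ) hA'card hA'conv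
    -- a common neighbour fact
    have hnbr : ∀ k ∈ A.erase ℓ, ∀ a : Fin K, a ∈ C k → a ∈ C ℓ →
        ∃ t ∈ A.erase ℓ, G.Adj ℓ t ∧ a ∈ C t := by
      intro k hk a haCk haCℓ
      obtain ⟨w0⟩ := hreach ℓ k a haCℓ haCk
      have hwp : w0.bypass.IsPath := w0.bypass_isPath
      have hkl : ℓ ≠ k := fun h => Finset.ne_of_mem_erase hk h.symm
      have hnn : ¬ w0.bypass.Nil := SimpleGraph.Walk.not_nil_of_ne hkl
      have hadjx : G.Adj ℓ (w0.bypass.getVert 1) := SimpleGraph.Walk.adj_snd hnn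
      have hxsupp : w0.bypass.getVert 1 ∈ w0.bypass.support := by
        rw [SimpleGraph.Walk.mem_support_iff_exists_getVert]
        refine ⟨1, rfl, ?_⟩
        rw [SimpleGraph.Walk.not_nil_iff_lt_length] at hnn
        omega
      have hxA : w0.bypass.getVert 1 ∈ A :=
        hconv ℓ hℓA k (hsubA hk) w0.bypass hwp _ hxsupp
      refine ⟨w0.bypass.getVert 1,
        Finset.mem_erase.mpr ⟨(G.ne_of_adj hadjx).symm, hxA⟩, hadjx, ?_⟩
      exact hRIP ℓ k a haCℓ haCk w0.bypass hwp _ hxsupp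
    obtain ⟨S, hS1, hS2, hS3⟩ :
        ∃ S : Finset (Fin K), S ⊆ C ℓ ∧
          (∀ k ∈ A.erase ℓ, ∀ a : Fin K, a ∈ C k → a ∈ C ℓ → a ∈ S) ∧
          (∀ v, margAt p' S v = margAt (pfam ℓ) S v) := by
      by_cases hnb : ∃ j ∈ A.erase ℓ, G.Adj ℓ j
      · obtain ⟨j, hjA', hadj⟩ := hnb
        refine ⟨C ℓ ∩ C j, Finset.inter_subset_left, ?_, ?_⟩
        · intro k hk a haCk haCℓ
          obtain ⟨t, htA', hadjt, haCt⟩ := hnbr k hk a haCk haCℓ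
          have : t = j := hleaf t (hsubA htA') j (hsubA hjA') hadjt hadj
          subst this
          exact Finset.mem_inter.mpr ⟨haCℓ, haCt⟩
        · intro v
          have h2 := margAt_eq_of_marg_eq
            (Finset.inter_subset_right : C ℓ ∩ C j ⊆ C j) (hp'marg j hjA') v
          rw [h2, ← hag ℓ j hadj v]
      · refine ⟨∅, Finset.empty_subset _, ?_, ?_⟩
        · intro k hk a haCk haCℓ
          obtain ⟨t, htA', hadjt, -⟩ := hnbr k hk a haCk haCℓ
          exact absurd ⟨t, htA', hadjt⟩ hnb
        · intro v
          rw [margAt_empty, margAt_empty, hp'dist.2, (hd ℓ).2]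
    set R := C ℓ \ S with hRdef
    have hRC : R ⊆ C ℓ := Finset.sdiff_subset
    have hSR : S ⊆ Rᶜ := fun i hi =>
      Finset.mem_compl.mpr fun hiR => (Finset.mem_sdiff.mp hiR).2 hi
    have hCRc : C ℓ ∩ Rᶜ = S := by
      ext a
      simp only [Finset.mem_inter, Finset.mem_compl, hRdef, Finset.mem_sdiff, not_and, not_not]
      constructor
      · rintro ⟨h1, h2⟩
        exact h2 h1
      · exact fun ha => ⟨hS1 ha, fun _ => ha⟩
    set c : (Fin K → Bool) → ℝ := fun u =>
      if margAt (pfam ℓ) S u = 0 then (2 : ℝ)⁻¹ ^ R.card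
      else margAt (pfam ℓ) (C ℓ) u / margAt (pfam ℓ) S u with hcdef
    have hplnn : ∀ v, 0 ≤ pfam ℓ v := (hd ℓ).1
    have hp'nn : ∀ v, 0 ≤ p' v := hp'dist.1
    have hcnn : ∀ u, 0 ≤ c u := by
      intro u
      rw [hcdef]
      dsimp only
      split_ifs
      · positivity
      · exact div_nonneg (margAt_nonneg hplnn _ _) (margAt_nonneg hplnn _ _)
    have hczero : ∀ v, margAt (pfam ℓ) S v = 0 → margAt (pfam ℓ) (C ℓ) v = 0 := by
      intro v h0
      have h1 := margAt_le hplnn hS1 v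
      have h2 := margAt_nonneg hplnn (C ℓ) v
      rw [h0] at h1
      linarith
    have hcdep : ∀ u w, (∀ i ∈ C ℓ, u i = w i) → c u = c w := by
      intro u w h
      rw [hcdef]
      dsimp only
      rw [margAt_congr (pfam ℓ) (X := S) (fun i hi => h i (hS1 hi)),
        margAt_congr (pfam ℓ) (X := C ℓ) h]
    have hc1 : ∀ w, margAt c Rᶜ w = 1 := by
      intro w
      by_cases h0 : margAt (pfam ℓ) S w = 0
      · unfold margAt
        have step : ∀ u : Fin K → Bool, (if ∀ i ∈ Rᶜ, u i = w i then c u else 0)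
            = if ∀ i ∈ Rᶜ, u i = w i then (2 : ℝ)⁻¹ ^ R.card else 0 := by
          intro u
          by_cases hu : ∀ i ∈ Rᶜ, u i = w i
          · rw [if_pos hu, if_pos hu, hcdef]
            dsimp only
            rw [if_pos]
            rw [margAt_congr (pfam ℓ) (X := S) (fun i hi => hu i (hSR hi))]
            exact h0
          · rw [if_neg hu, if_neg hu]
        rw [Finset.sum_congr rfl fun u _ => step u, ← Finset.sum_filter,
          Finset.sum_const, card_agree, compl_compl, nsmul_eq_mul]
        push_cast
        rw [← mul_pow]
        norm_num
      · unfold margAt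
        have step : ∀ u : Fin K → Bool, (if ∀ i ∈ Rᶜ, u i = w i then c u else 0)
            = (if ∀ i ∈ Rᶜ, u i = w i then margAt (pfam ℓ) (C ℓ) u else 0)
              / margAt (pfam ℓ) S w := by
          intro u
          by_cases hu : ∀ i ∈ Rᶜ, u i = w i
          · rw [if_pos hu, if_pos hu, hcdef]
            dsimp only
            have hSu : margAt (pfam ℓ) S u = margAt (pfam ℓ) S w :=
              margAt_congr _ (fun i hi => hu i (hSR hi))
            rw [hSu, if_neg h0]
          · rw [if_neg hu, if_neg hu, zero_div]
        rw [Finset.sum_congr rfl fun u _ => step u, ← Finset.sum_div]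
        have hnum : (∑ u : Fin K → Bool,
            if ∀ i ∈ Rᶜ, u i = w i then margAt (pfam ℓ) (C ℓ) u else 0)
            = margAt (pfam ℓ) S w := by
          have h1 := margAt_margAt (pfam ℓ) Rᶜ (C ℓ) (by rwa [compl_compl]) w
          rw [Finset.inter_comm, hCRc] at h1
          exact h1
        rw [hnum, div_self h0]
    refine ⟨fun v => margAt p' Rᶜ v * c v,
      ⟨fun v => mul_nonneg (margAt_nonneg hp'nn _ _) (hcnn v), ?_⟩, ?_⟩
    · have h := marg_glue p' c Rᶜ ∅ (Finset.empty_subset _) hc1 (fun _ => true)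
      rw [margAt_empty, margAt_empty] at h
      rw [h, hp'dist.2]
    · intro i hiA v
      by_cases hi : i = ℓ
      · subst hi
        have h1 := marg_clique p' c Rᶜ (C i) (Finset.compl_subset_compl.mpr hRC) hcdep v
        rw [hCRc] at h1
        rw [h1, hS3 v]
        by_cases h0 : margAt (pfam i) S v = 0
        · rw [h0, mul_zero, hczero v h0]
        · rw [hcdef]
          dsimp only
          rw [if_neg h0, div_mul_cancel₀ _ h0]
      · have hiA' : i ∈ A.erase ℓ := Finset.mem_erase.mpr ⟨hi, hiA⟩
        have hXR : C i ⊆ Rᶜ := by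
          intro a ha
          refine Finset.mem_compl.mpr fun haR => ?_
          exact (Finset.mem_sdiff.mp haR).2 (hS2 i hiA' a ha (Finset.mem_sdiff.mp haR).1)
        rw [marg_glue p' c Rᶜ (C i) hXR hc1 v]
        exact hp'marg i hiA' v


end GlueAux

/-- Global consistency: clique-local distributions that agree on the
separators of every junction tree edge extend to a joint distribution with those
marginals. -/
theorem gluing_tree {K : ℕ} (𝒢 : Finset (Finset (Fin K)))
    (G : SimpleGraph {C // C ∈ 𝒢}) (hG : IsJunctionTree 𝒢 G)
    (pfam : {C // C ∈ 𝒢} → (Fin K → Bool) → ℝ)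
    (hdist : ∀ C, IsDistribution (pfam C) ∧ DependsOnlyOn (pfam C) C.1)
    (hagree : ∀ C₁ C₂, G.Adj C₁ C₂ →
      ∀ v, margAt (pfam C₁) (C₁.1 ∩ C₂.1) v = margAt (pfam C₂) (C₁.1 ∩ C₂.1) v) :
    ∃ p : (Fin K → Bool) → ℝ, IsDistribution p ∧
      ∀ C : {C // C ∈ 𝒢}, ∀ v, margAt p C.1 v = margAt (pfam C) C.1 v := by
  obtain ⟨hac, -, hreach, hRIP⟩ := hG
  obtain ⟨p, hp, hm⟩ := glue_main (fun X : {C // C ∈ 𝒢} => X.1) G hac hreach hRIP pfam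
    (fun i => (hdist i).1) hagree (Fintype.card {C // C ∈ 𝒢}) Finset.univ
    Finset.card_univ (fun x _ y _ w _ z _ => Finset.mem_univ z)
  exact ⟨p, hp, fun Ci v => hm Ci (Finset.mem_univ _) v⟩
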